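/- arXiv:1808.09482 — 2 statements merged into one kernel-verified Lean document; each statement's English description precedes it below -/
import Mathlib

section
/- Volume formula for a full-dimensional zonotope: for vectors v₁,…,vₘ ∈ ℝ^n with m ≥ n, the n-dimensional Lebesgue measure of Z(v₁,…,vₘ) equals the sum over all n-element subsets S ⊆ {1,…,m} of |det(v_{i} : i ∈ S)|. -/
open MeasureTheory Finset

def zonotope {n m : ℕ} (v : Fin m → (Fin n → ℝ)) : Set (Fin n → ℝ) :=
  {x | ∃ l : Fin m → ℝ, (∀ i, l i ∈ Set.Icc (0 : ℝ) 1) ∧ x = ∑ i, l i • v i}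

/-- The absolute value of the determinant of the `n × n` matrix whose columns are the
vectors `v i` for `i ∈ S` (in increasing index order), where `S` has `n` elements. -/
def absDetCols {n m : ℕ} (v : Fin m → (Fin n → ℝ)) (S : Finset (Fin m))
    (hS : S.card = n) : ℝ :=
  |(Matrix.of fun (r : Fin n) (c : Fin n) => v (S.orderIsoOfFin hS c) r).det|

/-! ### Auxiliary definitions -/

/-- The last standard basis vector in `Fin (n+1) → ℝ`. -/
def elast (n : ℕ) : Fin (n+1) → ℝ := fun k => if k = Fin.last n then 1 else 0

/-- Total function version of the summand. -/
noncomputable def Gz {n m : ℕ} (v : Fin m → (Fin n → ℝ)) (S : Finset (Fin m)) : ENNReal :=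
  if h : S.card = n then ENNReal.ofReal (absDetCols v S h) else 0

lemma Gz_eq {n m : ℕ} (v : Fin m → (Fin n → ℝ)) (S : Finset (Fin m)) (h : S.card = n) :
    Gz v S = ENNReal.ofReal (absDetCols v S h) := dif_pos h

/-! ### Basic properties of zonotopes -/

lemma zonotope_eq_image {n m : ℕ} (v : Fin m → (Fin n → ℝ)) :
    zonotope v = (Matrix.toLin' (Matrix.of fun r c => v c r)) '' (Set.Icc (0 : Fin m → ℝ) 1) := by
  ext x
  simp only [zonotope, Set.mem_setOf_eq, Set.mem_image, Set.mem_Icc, Pi.le_def]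
  constructor
  · rintro ⟨l, hl, rfl⟩
    refine ⟨l, ⟨fun i => (hl i).1, fun i => (hl i).2⟩, ?_⟩
    funext r
    simp [Matrix.toLin'_apply, Matrix.mulVec, dotProduct, Finset.sum_apply, mul_comm]
  · rintro ⟨l, hl, rfl⟩
    refine ⟨l, fun i => ⟨hl.1 i, hl.2 i⟩, ?_⟩
    funext r
    simp [Matrix.toLin'_apply, Matrix.mulVec, dotProduct, Finset.sum_apply, mul_comm]

lemma isCompact_zonotope {n m : ℕ} (v : Fin m → (Fin n → ℝ)) :
    IsCompact (zonotope v) := by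
  rw [zonotope_eq_image]
  exact (isCompact_Icc).image (LinearMap.continuous_of_finiteDimensional _)

lemma convex_zonotope {n m : ℕ} (v : Fin m → (Fin n → ℝ)) :
    Convex ℝ (zonotope v) := by
  rw [zonotope_eq_image]
  exact (convex_Icc _ _).linear_image _

lemma zonotope_image_linear {n k m : ℕ} (g : (Fin n → ℝ) →ₗ[ℝ] (Fin k → ℝ))
    (v : Fin m → (Fin n → ℝ)) :
    zonotope (fun i => g (v i)) = g '' zonotope v := by
  ext x
  simp only [zonotope, Set.mem_setOf_eq, Set.mem_image]
  constructor
  · rintro ⟨l, hl, rfl⟩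
    exact ⟨∑ i, l i • v i, ⟨l, hl, rfl⟩, by simp [map_sum]⟩
  · rintro ⟨y, ⟨l, hl, rfl⟩, rfl⟩
    exact ⟨l, hl, by simp [map_sum]⟩

lemma mem_zonotope_snoc {n m : ℕ} (u : Fin m → (Fin n → ℝ)) (a : Fin n → ℝ) (x : Fin n → ℝ) :
    x ∈ zonotope (Fin.snoc u a) ↔
      ∃ y ∈ zonotope u, ∃ t ∈ Set.Icc (0:ℝ) 1, x = y + t • a := by
  constructor
  · rintro ⟨l, hl, rfl⟩
    refine ⟨∑ i, l (Fin.castSucc i) • u i, ⟨fun i => l i.castSucc, fun i => hl _, rfl⟩,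
      l (Fin.last m), hl _, ?_⟩
    rw [Fin.sum_univ_castSucc]
    simp [Fin.snoc_castSucc, Fin.snoc_last]
  · rintro ⟨y, ⟨l, hl, rfl⟩, t, ht, rfl⟩
    refine ⟨Fin.snoc l t, ?_, ?_⟩
    · intro i
      rcases Fin.eq_castSucc_or_eq_last i with ⟨j, rfl⟩ | rfl
      · simpa [Fin.snoc_castSucc] using hl j
      · simpa [Fin.snoc_last] using ht
    · rw [Fin.sum_univ_castSucc]
      simp [Fin.snoc_castSucc, Fin.snoc_last]

/-! ### Combinatorial lemmas -/

lemma last_not_mem_map {m : ℕ} (S : Finset (Fin m)) :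
    Fin.last m ∉ S.map Fin.castSuccEmb := by
  simp only [Finset.mem_map]
  rintro ⟨x, -, h⟩
  exact (Fin.castSucc_lt_last x).ne h

lemma univ_fin_succ_eq {m : ℕ} :
    (univ : Finset (Fin (m+1))) = insert (Fin.last m) ((univ : Finset (Fin m)).map Fin.castSuccEmb) := by
  ext x
  simp only [Finset.mem_univ, true_iff, Finset.mem_insert, Finset.mem_map]
  rcases Fin.eq_castSucc_or_eq_last x with ⟨y, rfl⟩ | rfl
  · exact Or.inr ⟨y, by simp, rfl⟩
  · exact Or.inl rfl

lemma sum_split {M : Type*} [AddCommMonoid M] (m k : ℕ) (F : Finset (Fin (m+1)) → M) :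
    ∑ S ∈ powersetCard (k+1) (univ : Finset (Fin (m+1))), F S =
      (∑ S ∈ powersetCard (k+1) (univ : Finset (Fin m)), F (S.map Fin.castSuccEmb)) +
      ∑ S ∈ powersetCard k (univ : Finset (Fin m)), F (insert (Fin.last m) (S.map Fin.castSuccEmb)) := by
  rw [univ_fin_succ_eq, Finset.powersetCard_succ_insert (last_not_mem_map _)]
  rw [Finset.sum_union]
  · congr 1
    · rw [Finset.powersetCard_map, Finset.sum_map]
      rfl
    · rw [Finset.sum_image]
      · rw [Finset.powersetCard_map, Finset.sum_map]
        rfl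
      · intro A hA B hB h
        have hlA : Fin.last m ∉ A := by
          rw [Finset.mem_coe, Finset.mem_powersetCard] at hA
          intro hmem
          exact last_not_mem_map _ (hA.1 hmem)
        have hlB : Fin.last m ∉ B := by
          rw [Finset.mem_coe, Finset.mem_powersetCard] at hB
          intro hmem
          exact last_not_mem_map _ (hB.1 hmem)
        have : A.erase (Fin.last m) = B.erase (Fin.last m) := by
          rw [← Finset.erase_insert hlA, ← Finset.erase_insert hlB, h]
        rwa [Finset.erase_eq_of_notMem hlA, Finset.erase_eq_of_notMem hlB] at this
  · rw [Finset.disjoint_left]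
    intro A hA hA'
    rw [Finset.mem_powersetCard] at hA
    rw [Finset.mem_image] at hA'
    obtain ⟨B, hB, rfl⟩ := hA'
    exact last_not_mem_map _ (hA.1 (Finset.mem_insert_self _ _))

lemma orderIso_map {m k : ℕ} (S : Finset (Fin m)) (h' : S.card = k)
    (h : (S.map Fin.castSuccEmb).card = k) (c : Fin k) :
    ((S.map Fin.castSuccEmb).orderIsoOfFin h c : Fin (m+1)) =
      Fin.castSucc (S.orderIsoOfFin h' c) := by
  have key : (fun c => Fin.castSucc (S.orderIsoOfFin h' c : Fin m)) =
      ⇑((S.map Fin.castSuccEmb).orderEmbOfFin h) := by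
    apply Finset.orderEmbOfFin_unique h
    · intro x
      exact Finset.mem_map_of_mem _ (S.orderIsoOfFin h' x).2
    · intro a b hab
      exact Fin.castSucc_lt_castSucc_iff.mpr (by
        exact (S.orderIsoOfFin h').strictMono hab)
  rw [Finset.coe_orderIsoOfFin_apply, ← key]

lemma orderIso_insert_last {m k : ℕ} (S : Finset (Fin m)) (h' : S.card = k)
    (h : (insert (Fin.last m) (S.map Fin.castSuccEmb)).card = k + 1) (c : Fin (k+1)) :
    ((insert (Fin.last m) (S.map Fin.castSuccEmb)).orderIsoOfFin h c : Fin (m+1)) =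
      Fin.snoc (α := fun _ => Fin (m+1)) (fun c' : Fin k => Fin.castSucc (S.orderIsoOfFin h' c' : Fin m)) (Fin.last m) c := by
  set f : Fin (k+1) → Fin (m+1) :=
    Fin.snoc (α := fun _ => Fin (m+1)) (fun c' : Fin k => Fin.castSucc (S.orderIsoOfFin h' c' : Fin m)) (Fin.last m) with hf
  have key : f = ⇑((insert (Fin.last m) (S.map Fin.castSuccEmb)).orderEmbOfFin h) := by
    apply Finset.orderEmbOfFin_unique h
    · intro x
      rcases Fin.eq_castSucc_or_eq_last x with ⟨y, rfl⟩ | rfl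
      · rw [hf]
        simp only [Fin.snoc_castSucc]
        exact Finset.mem_insert_of_mem (Finset.mem_map_of_mem _ (S.orderIsoOfFin h' y).2)
      · rw [hf]
        simp only [Fin.snoc_last]
        exact Finset.mem_insert_self _ _
    · intro a b hab
      rcases Fin.eq_castSucc_or_eq_last b with ⟨b', rfl⟩ | rfl
      · obtain ⟨a', rfl⟩ : ∃ a', a = Fin.castSucc a' := by
          rcases Fin.eq_castSucc_or_eq_last a with ⟨a', rfl⟩ | rfl
          · exact ⟨a', rfl⟩
          · exact absurd (hab.trans (Fin.castSucc_lt_last b')) (lt_irrefl _)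
        rw [hf]
        simp only [Fin.snoc_castSucc]
        exact Fin.castSucc_lt_castSucc_iff.mpr
          ((S.orderIsoOfFin h').strictMono (Fin.castSucc_lt_castSucc_iff.mp hab))
      · obtain ⟨a', rfl⟩ : ∃ a', a = Fin.castSucc a' := by
          rcases Fin.eq_castSucc_or_eq_last a with ⟨a', rfl⟩ | rfl
          · exact ⟨a', rfl⟩
          · exact absurd hab (lt_irrefl _)
        rw [hf]
        simp only [Fin.snoc_castSucc, Fin.snoc_last]
        exact Fin.castSucc_lt_last _
  rw [Finset.coe_orderIsoOfFin_apply, ← key]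

lemma absDetCols_map {n m : ℕ} (w : Fin (m+1) → (Fin n → ℝ)) (S : Finset (Fin m))
    (h' : S.card = n) (h : (S.map Fin.castSuccEmb).card = n) :
    absDetCols w (S.map Fin.castSuccEmb) h = absDetCols (fun i => w i.castSucc) S h' := by
  unfold absDetCols
  congr 1
  congr 1
  ext r c
  rw [Matrix.of_apply, Matrix.of_apply, orderIso_map S h' h c]

lemma absDetCols_insert_last {k m : ℕ} (w : Fin (m+1) → (Fin (k+1) → ℝ))
    (hw : w (Fin.last m) = elast k) (S : Finset (Fin m)) (h' : S.card = k)
    (h : (insert (Fin.last m) (S.map Fin.castSuccEmb)).card = k + 1) :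
    absDetCols w (insert (Fin.last m) (S.map Fin.castSuccEmb)) h =
      absDetCols (fun i => LinearMap.funLeft ℝ ℝ Fin.castSucc (w i.castSucc)) S h' := by
  unfold absDetCols
  set A : Matrix (Fin k) (Fin k) ℝ :=
    Matrix.of fun (r c : Fin k) => w ((S.orderIsoOfFin h' c : Fin m).castSucc) (Fin.castSucc r) with hA
  set C : Matrix (Fin 1) (Fin k) ℝ :=
    Matrix.of fun (_ : Fin 1) (c : Fin k) => w ((S.orderIsoOfFin h' c : Fin m).castSucc) (Fin.last k) with hC
  set D : Matrix (Fin 1) (Fin 1) ℝ := Matrix.of fun _ _ => (1:ℝ) with hD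
  set M : Matrix (Fin (k+1)) (Fin (k+1)) ℝ :=
    Matrix.of fun (r c : Fin (k+1)) =>
      w (((insert (Fin.last m) (S.map Fin.castSuccEmb)).orderIsoOfFin h c : Fin (m+1))) r with hM
  have hsub : M.submatrix finSumFinEquiv finSumFinEquiv = Matrix.fromBlocks A 0 C D := by
    ext rc cc
    rcases rc with r | r <;> rcases cc with c | c
    · simp only [Matrix.submatrix_apply, Matrix.fromBlocks_apply₁₁, hM, Matrix.of_apply]
      rw [orderIso_insert_last S h' h]
      rw [finSumFinEquiv_apply_left, finSumFinEquiv_apply_left]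
      show w (Fin.snoc (α := fun _ => Fin (m+1)) _ _ (Fin.castSucc c)) (Fin.castSucc r) = A r c
      rw [Fin.snoc_castSucc]
      rfl
    · simp only [Matrix.submatrix_apply, Matrix.fromBlocks_apply₁₂, hM, Matrix.of_apply]
      rw [orderIso_insert_last S h' h]
      rw [finSumFinEquiv_apply_left, finSumFinEquiv_apply_right]
      have hc : (Fin.natAdd k c : Fin (k+1)) = Fin.last k := by
        ext; simp [Fin.natAdd, Subsingleton.elim c 0]
      rw [hc]
      show w (Fin.snoc (α := fun _ => Fin (m+1)) _ _ (Fin.last k)) (Fin.castSucc r) = 0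
      rw [Fin.snoc_last, hw]
      simp [elast, (Fin.castSucc_lt_last r).ne]
    · simp only [Matrix.submatrix_apply, Matrix.fromBlocks_apply₂₁, hM, Matrix.of_apply]
      rw [orderIso_insert_last S h' h]
      rw [finSumFinEquiv_apply_right, finSumFinEquiv_apply_left]
      have hr : (Fin.natAdd k r : Fin (k+1)) = Fin.last k := by
        ext; simp [Fin.natAdd, Subsingleton.elim r 0]
      rw [hr]
      show w (Fin.snoc (α := fun _ => Fin (m+1)) _ _ (Fin.castSucc c)) (Fin.last k) = C r c
      rw [Fin.snoc_castSucc]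
      rfl
    · simp only [Matrix.submatrix_apply, Matrix.fromBlocks_apply₂₂, hM, Matrix.of_apply]
      rw [orderIso_insert_last S h' h]
      rw [finSumFinEquiv_apply_right, finSumFinEquiv_apply_right]
      have hr : (Fin.natAdd k r : Fin (k+1)) = Fin.last k := by
        ext; simp [Fin.natAdd, Subsingleton.elim r 0]
      have hc : (Fin.natAdd k c : Fin (k+1)) = Fin.last k := by
        ext; simp [Fin.natAdd, Subsingleton.elim c 0]
      rw [hr, hc]
      show w (Fin.snoc (α := fun _ => Fin (m+1)) _ _ (Fin.last k)) (Fin.last k) = D r c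
      rw [Fin.snoc_last, hw]
      simp [elast, hD]
  have hdet : M.det = A.det := by
    rw [← Matrix.det_submatrix_equiv_self finSumFinEquiv M, hsub,
      Matrix.det_fromBlocks_zero₁₂]
    have : D.det = 1 := by rw [Matrix.det_fin_one]; rfl
    rw [this, mul_one]
  have hgoal : (Matrix.of fun (r c : Fin k) =>
      (fun i => LinearMap.funLeft ℝ ℝ Fin.castSucc (w i.castSucc)) ((S.orderIsoOfFin h' c : Fin m)) r) = A := by
    ext r c
    simp only [Matrix.of_apply, LinearMap.funLeft_apply, hA]
  show |M.det| = _
  rw [hdet, hgoal]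

/-! ### The core Fubini argument -/

lemma volume_zonotope_snoc_elast (k m : ℕ) (u : Fin m → (Fin (k+1) → ℝ)) :
    volume (zonotope (Fin.snoc u (elast k))) =
      volume (zonotope u) +
        volume (zonotope (fun i => LinearMap.funLeft ℝ ℝ Fin.castSucc (u i))) := by
  classical
  set L : (Fin (k+1) → ℝ) →ₗ[ℝ] ℝ × (Fin k → ℝ) :=
    LinearMap.prod (LinearMap.proj (Fin.last k)) (LinearMap.funLeft ℝ ℝ Fin.castSucc) with hL
  set Φ := MeasurableEquiv.piFinSuccAbove (fun _ : Fin (k+1) => ℝ) (Fin.last k) with hΦ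
  have hΦL : ⇑Φ = ⇑L := by
    funext x
    rw [hΦ, MeasurableEquiv.piFinSuccAbove_apply]
    simp only [Fin.insertNthEquiv, Equiv.coe_fn_symm_mk]
    refine Prod.ext rfl ?_
    funext j
    show x ((Fin.last k).succAbove j) = _
    rw [Fin.succAbove_last]
    rfl
  have hmp : MeasurePreserving Φ (volume : Measure (Fin (k+1) → ℝ))
      ((volume : Measure ℝ).prod (volume : Measure (Fin k → ℝ))) := by
    exact measurePreserving_piFinSuccAbove (fun _ : Fin (k+1) => (volume : Measure ℝ)) (Fin.last k)
  set A := zonotope u with hA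
  set B := zonotope (Fin.snoc u (elast k)) with hB
  have hAc : IsCompact A := isCompact_zonotope u
  have hBc : IsCompact B := isCompact_zonotope _
  have hAconv : Convex ℝ A := convex_zonotope u
  set C : Set (ℝ × (Fin k → ℝ)) := L '' A with hC
  have hCc : IsCompact C := hAc.image (LinearMap.continuous_of_finiteDimensional L)
  have hCconv : Convex ℝ C := hAconv.linear_image L
  have hCmeas : MeasurableSet C := hCc.measurableSet
  have hLe : L (elast k) = (1, 0) := by
    rw [hL]
    refine Prod.ext ?_ ?_
    · simp [elast, LinearMap.proj]
    · funext j
      simp [elast, LinearMap.funLeft_apply, (Fin.castSucc_lt_last j).ne]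
  have hImB : Φ '' B = {p : ℝ × (Fin k → ℝ) |
      ∃ s ∈ Set.Icc (0:ℝ) 1, (p.1 - s, p.2) ∈ C} := by
    rw [hΦL]
    ext p
    simp only [Set.mem_image, Set.mem_setOf_eq]
    constructor
    · rintro ⟨x, hx, rfl⟩
      rw [hB] at hx
      obtain ⟨y, hy, t, ht, rfl⟩ := (mem_zonotope_snoc u (elast k) _).mp hx
      refine ⟨t, ht, ?_⟩
      have : L (y + t • elast k) = L y + t • (1, 0) := by rw [map_add, _root_.map_smul, hLe]
      rw [this]
      have h1 : (L y + t • ((1:ℝ), (0 : Fin k → ℝ))).1 - t = (L y).1 := by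
        simp
      have h2 : (L y + t • ((1:ℝ), (0 : Fin k → ℝ))).2 = (L y).2 := by
        simp
      rw [h1, h2, Prod.mk.eta]
      exact ⟨y, hy, rfl⟩
    · rintro ⟨s, hs, ⟨y, hy, hLy⟩⟩
      refine ⟨y + s • elast k, ?_, ?_⟩
      · rw [hB]
        exact (mem_zonotope_snoc u (elast k) _).mpr ⟨y, hy, s, hs, rfl⟩
      · rw [map_add, _root_.map_smul, hLe, hLy]
        refine Prod.ext ?_ ?_ <;> simp
  have hslice : ∀ y : Fin k → ℝ,
      volume ((fun t => (t, y)) ⁻¹' (Φ '' B)) =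
        volume ((fun t => (t, y)) ⁻¹' C) +
          Set.indicator (Prod.snd '' C) (fun _ => (1:ENNReal)) y := by
    intro y
    set K : Set ℝ := (fun t => (t, y)) ⁻¹' C with hK
    have hsliceB : (fun t => (t, y)) ⁻¹' (Φ '' B) = {t | ∃ s ∈ Set.Icc (0:ℝ) 1, t - s ∈ K} := by
      rw [hImB]; rfl
    by_cases hne : K.Nonempty
    · have hKclosed : IsClosed K :=
        hCc.isClosed.preimage (Continuous.prodMk_left y)
      have hKbdd : Bornology.IsBounded K := by
        refine ((hCc.image continuous_fst).isBounded).subset ?_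
        intro t ht
        exact ⟨(t, y), ht, rfl⟩
      have hKc : IsCompact K := Metric.isCompact_of_isClosed_isBounded hKclosed hKbdd
      have hKconv : Convex ℝ K := by
        intro t1 ht1 t2 ht2 a b ha hb hab
        have h1 : ((t1 : ℝ), y) ∈ C := ht1
        have h2 : ((t2 : ℝ), y) ∈ C := ht2
        have := hCconv h1 h2 ha hb hab
        have heq : a • ((t1:ℝ), y) + b • ((t2:ℝ), y) = (a * t1 + b * t2, y) := by
          ext
          · simp
          · simp only [Prod.snd_add, Prod.smul_snd]
            rw [← add_smul, hab, one_smul]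
        rw [heq] at this
        exact this
      have hKIcc : K = Set.Icc (sInf K) (sSup K) :=
        eq_Icc_of_connected_compact ⟨hne, hKconv.isPreconnected⟩ hKc
      set a := sInf K
      set b := sSup K
      have hab : a ≤ b := by
        obtain ⟨t, ht⟩ := hne
        rw [hKIcc] at ht
        exact le_trans ht.1 ht.2
      have hsliceB' : (fun t => (t, y)) ⁻¹' (Φ '' B) = Set.Icc a (b + 1) := by
        rw [hsliceB]
        ext t
        simp only [Set.mem_setOf_eq, Set.mem_Icc]
        constructor
        · rintro ⟨s, hs, hts⟩
          rw [hKIcc] at hts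
          obtain ⟨h1, h2⟩ := hts
          constructor
          · linarith [hs.1]
          · linarith [hs.2]
        · rintro ⟨h1, h2⟩
          rcases le_total t b with h | h
          · exact ⟨0, ⟨le_refl 0, zero_le_one⟩, by rw [hKIcc]; exact ⟨by linarith, by linarith⟩⟩
          · exact ⟨t - b, ⟨by linarith, by linarith⟩, by rw [hKIcc]; constructor <;> [linarith; linarith]⟩
      have hymem : y ∈ Prod.snd '' C := by
        obtain ⟨t, ht⟩ := hne
        exact ⟨(t, y), ht, rfl⟩
      rw [hsliceB', hKIcc, Set.indicator_of_mem hymem, Real.volume_Icc, Real.volume_Icc]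
      rw [show b + 1 - a = (b - a) + 1 by ring, ENNReal.ofReal_add (by linarith) zero_le_one,
        ENNReal.ofReal_one]
    · have hK0 : K = ∅ := Set.not_nonempty_iff_eq_empty.mp hne
      have hsliceB0 : (fun t => (t, y)) ⁻¹' (Φ '' B) = ∅ := by
        rw [hsliceB]
        ext t
        simp only [Set.mem_setOf_eq, Set.mem_empty_iff_false, iff_false]
        rintro ⟨s, -, hts⟩
        rw [hK0] at hts
        exact hts
      have hynmem : y ∉ Prod.snd '' C := by
        rintro ⟨⟨t, y'⟩, hmem, rfl⟩
        exact hne ⟨t, hmem⟩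
      rw [hsliceB0, hK0, Set.indicator_of_notMem hynmem]
      simp
  have hBmeas : MeasurableSet (Φ '' B) := by
    rw [show Φ '' B = ⇑Φ.symm ⁻¹' B from (Equiv.image_eq_preimage_symm Φ.toEquiv B)]
    exact Φ.symm.measurable hBc.measurableSet
  have hvolB : volume B = (volume.prod volume) (Φ '' B) := by
    have := hmp.measure_preimage hBmeas.nullMeasurableSet
    rwa [Set.preimage_image_eq B Φ.injective] at this
  have hvolA : volume A = (volume.prod volume) C := by
    have hCm' : MeasurableSet (Φ '' A) := by
      rw [show Φ '' A = ⇑Φ.symm ⁻¹' A from (Equiv.image_eq_preimage_symm Φ.toEquiv A)]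
      exact Φ.symm.measurable hAc.measurableSet
    have := hmp.measure_preimage hCm'.nullMeasurableSet
    rw [Set.preimage_image_eq A Φ.injective] at this
    rw [this, hΦL, hC]
  have hproj : Prod.snd '' C = zonotope (fun i => LinearMap.funLeft ℝ ℝ Fin.castSucc (u i)) := by
    rw [hC, Set.image_image, zonotope_image_linear]
    rfl
  rw [hvolB, Measure.prod_apply_symm hBmeas]
  calc ∫⁻ y, volume ((fun t => (t, y)) ⁻¹' (Φ '' B)) =
      ∫⁻ y, (volume ((fun t => (t, y)) ⁻¹' C) +
        Set.indicator (Prod.snd '' C) (fun _ => (1:ENNReal)) y) := lintegral_congr hslice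
    _ = (∫⁻ y, volume ((fun t => (t, y)) ⁻¹' C)) +
        ∫⁻ y, Set.indicator (Prod.snd '' C) (fun _ => (1:ENNReal)) y := by
        rw [lintegral_add_left (measurable_measure_prodMk_right hCmeas)]
    _ = volume A + volume (zonotope (fun i => LinearMap.funLeft ℝ ℝ Fin.castSucc (u i))) := by
        congr 1
        · rw [hvolA, Measure.prod_apply_symm hCmeas]
        · rw [lintegral_indicator ((hCc.image continuous_snd).measurableSet),
            setLIntegral_one, hproj]

/-! ### Change of variables -/

lemma exists_equiv_mapsto (k : ℕ) (w : Fin (k+1) → ℝ) (hw : w ≠ 0) :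
    ∃ g : (Fin (k+1) → ℝ) ≃ₗ[ℝ] (Fin (k+1) → ℝ), g w = elast k := by
  classical
  have hli : LinearIndepOn ℝ id ({w} : Set (Fin (k+1) → ℝ)) := by
    exact (linearIndepOn_singleton_iff ℝ).mpr hw
  let b := Module.Basis.extend hli
  haveI : Fintype ↑(hli.extend (Set.subset_univ _)) := FiniteDimensional.fintypeBasisIndex b
  have hcard : Fintype.card ↑(hli.extend (Set.subset_univ _)) = k + 1 := by
    rw [← Module.finrank_eq_card_basis b, Module.finrank_pi, Fintype.card_fin]
  let σ₀ := Fintype.equivFinOfCardEq hcard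
  have hwmem : w ∈ hli.extend (Set.subset_univ _) :=
    hli.subset_extend _ (Set.mem_singleton w)
  let iw : ↑(hli.extend (Set.subset_univ _)) := ⟨w, hwmem⟩
  let σ := σ₀.trans (Equiv.swap (σ₀ iw) (Fin.last k))
  refine ⟨(b.reindex σ).equivFun, ?_⟩
  have hbw : b iw = w := Module.Basis.extend_apply_self hli iw
  have h1 : (b.reindex σ) (σ iw) = w := by rw [Module.Basis.reindex_apply, Equiv.symm_apply_apply, hbw]
  have h2 : σ iw = Fin.last k := by
    show (σ₀.trans (Equiv.swap (σ₀ iw) (Fin.last k))) iw = Fin.last k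
    simp [Equiv.swap_apply_left]
  funext j
  have h3 : (b.reindex σ).equivFun ((b.reindex σ) (σ iw)) j = if σ iw = j then 1 else 0 :=
    Module.Basis.equivFun_self _ _ _
  rw [h1, h2] at h3
  rw [h3, elast]
  simp [eq_comm]

lemma colsMat_comp {n m : ℕ} (g : (Fin n → ℝ) →ₗ[ℝ] (Fin n → ℝ)) (w : Fin m → (Fin n → ℝ))
    (σ : Fin n → Fin m) :
    (Matrix.of fun (r : Fin n) (c : Fin n) => (g (w (σ c))) r) =
      LinearMap.toMatrix' g * (Matrix.of fun (r : Fin n) (c : Fin n) => w (σ c) r) := by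
  ext r c
  have : g (w (σ c)) = (LinearMap.toMatrix' g).mulVec (w (σ c)) := by
    rw [← Matrix.toLin'_apply, Matrix.toLin'_toMatrix']
  rw [Matrix.mul_apply]
  simp [this, Matrix.mulVec, dotProduct]

lemma absDetCols_comp {n m : ℕ} (g : (Fin n → ℝ) ≃ₗ[ℝ] (Fin n → ℝ)) (v : Fin m → (Fin n → ℝ))
    (S : Finset (Fin m)) (h : S.card = n) :
    absDetCols (fun i => g (v i)) S h = |LinearMap.det (g : (Fin n → ℝ) →ₗ[ℝ] (Fin n → ℝ))| * absDetCols v S h := by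
  unfold absDetCols
  have := colsMat_comp (g : (Fin n → ℝ) →ₗ[ℝ] (Fin n → ℝ)) v (fun c => (S.orderIsoOfFin h c : Fin m))
  rw [show (Matrix.of fun (r : Fin n) (c : Fin n) => (fun i => g (v i)) (S.orderIsoOfFin h c : Fin m) r) =
    LinearMap.toMatrix' (g : (Fin n → ℝ) →ₗ[ℝ] (Fin n → ℝ)) *
      (Matrix.of fun (r : Fin n) (c : Fin n) => v (S.orderIsoOfFin h c : Fin m) r) from this]
  rw [Matrix.det_mul, abs_mul, LinearMap.det_toMatrix']

lemma Gz_comp {n m : ℕ} (g : (Fin n → ℝ) ≃ₗ[ℝ] (Fin n → ℝ)) (v : Fin m → (Fin n → ℝ))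
    (S : Finset (Fin m)) (h : S.card = n) :
    Gz (fun i => g (v i)) S =
      ENNReal.ofReal |LinearMap.det (g : (Fin n → ℝ) →ₗ[ℝ] (Fin n → ℝ))| * Gz v S := by
  rw [Gz_eq _ _ h, Gz_eq _ _ h, absDetCols_comp, ENNReal.ofReal_mul (abs_nonneg _)]

/-! ### Base cases -/

lemma orderIso_univ {n : ℕ} (h : (univ : Finset (Fin n)).card = n) (c : Fin n) :
    ((univ : Finset (Fin n)).orderIsoOfFin h c : Fin n) = c := by
  have := Finset.orderEmbOfFin_unique h (f := id) (fun x => Finset.mem_univ x) strictMono_id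
  have h2 : ((univ : Finset (Fin n)).orderIsoOfFin h c : Fin n) = (univ : Finset (Fin n)).orderEmbOfFin h c := by
    simp [Finset.coe_orderIsoOfFin_apply]
  rw [h2, ← this]; rfl

lemma powersetCard_univ_self (n : ℕ) : ((univ : Finset (Fin n)).powersetCard n) = {univ} := by
  ext S
  simp only [Finset.mem_powersetCard_univ, Finset.mem_singleton]
  constructor
  · intro h; exact Finset.eq_univ_of_card S (by simp [h])
  · rintro rfl; simp

lemma key_base (n : ℕ) (v : Fin n → (Fin n → ℝ)) :
    volume (zonotope v) = ∑ S ∈ powersetCard n (univ : Finset (Fin n)), Gz v S := by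
  have hcard : (univ : Finset (Fin n)).card = n := Finset.card_fin n
  rw [show powersetCard n (univ : Finset (Fin n)) = (univ : Finset (Fin n)).powersetCard n from rfl,
    powersetCard_univ_self, Finset.sum_singleton, Gz_eq _ _ hcard]
  rw [zonotope_eq_image, Measure.addHaar_image_linearMap, LinearMap.det_toLin']
  have hvol1 : volume (Set.Icc (0 : Fin n → ℝ) 1) = 1 := by
    rw [Real.volume_Icc_pi]
    simp
  rw [hvol1, mul_one]
  congr 1
  unfold absDetCols
  congr 2
  ext r c
  rw [Matrix.of_apply, Matrix.of_apply, orderIso_univ hcard c]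

lemma key_zero (m : ℕ) (v : Fin m → (Fin 0 → ℝ)) :
    volume (zonotope v) = ∑ S ∈ powersetCard 0 (univ : Finset (Fin m)), Gz v S := by
  have huniv : zonotope v = Set.univ := by
    apply Set.eq_univ_of_forall
    intro x
    refine ⟨0, fun i => ⟨le_refl _, zero_le_one⟩, ?_⟩
    exact Subsingleton.elim _ _
  have huniv2 : (Set.univ : Set (Fin 0 → ℝ)) = Set.Icc 0 1 := by
    ext x
    simp only [Set.mem_univ, true_iff, Set.mem_Icc, Pi.le_def]
    exact ⟨fun i => i.elim0, fun i => i.elim0⟩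
  rw [huniv, huniv2, Real.volume_Icc_pi]
  rw [Finset.powersetCard_zero, Finset.sum_singleton, Gz_eq _ _ (Finset.card_empty)]
  simp [absDetCols, Matrix.det_fin_zero]

/-! ### Degenerate (zero last vector) helpers -/

lemma zonotope_snoc_zero {n m : ℕ} (u : Fin m → (Fin n → ℝ)) :
    zonotope (Fin.snoc u (0 : Fin n → ℝ)) = zonotope u := by
  ext x
  rw [mem_zonotope_snoc]
  constructor
  · rintro ⟨y, hy, t, ht, rfl⟩
    simpa using hy
  · intro hx
    exact ⟨x, hx, 0, ⟨le_refl _, zero_le_one⟩, by simp⟩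

lemma absDetCols_insert_last_zero {n m : ℕ} (w : Fin (m+1) → (Fin n → ℝ))
    (hw : w (Fin.last m) = 0) (S : Finset (Fin m)) (h' : S.card = n - 1) (hn : n ≠ 0)
    (h : (insert (Fin.last m) (S.map Fin.castSuccEmb)).card = n) :
    absDetCols w (insert (Fin.last m) (S.map Fin.castSuccEmb)) h = 0 := by
  obtain ⟨k, rfl⟩ : ∃ k, n = k + 1 := ⟨n - 1, (Nat.succ_pred_eq_of_pos (Nat.pos_of_ne_zero hn)).symm⟩
  have h'' : S.card = k := by omega
  unfold absDetCols
  rw [abs_eq_zero]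
  apply Matrix.det_eq_zero_of_column_eq_zero (Fin.last k)
  intro r
  rw [Matrix.of_apply, orderIso_insert_last S h'' h, Fin.snoc_last, hw]
  rfl

/-! ### The main induction -/

lemma key : ∀ m n : ℕ, n ≤ m → ∀ v : Fin m → (Fin n → ℝ),
    volume (zonotope v) = ∑ S ∈ powersetCard n (univ : Finset (Fin m)), Gz v S := by
  intro m
  induction m with
  | zero =>
    intro n hn v
    obtain rfl : n = 0 := Nat.le_zero.mp hn
    exact key_base 0 v
  | succ m IH =>
    intro n hn v
    rcases Nat.lt_or_ge n (m+1) with hlt | hge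
    swap
    · obtain rfl : n = m + 1 := le_antisymm hn hge
      exact key_base (m+1) v
    have hnm : n ≤ m := Nat.lt_succ_iff.mp hlt
    rcases Nat.eq_zero_or_pos n with rfl | hpos
    · exact key_zero (m+1) v
    obtain ⟨k, rfl⟩ : ∃ k, n = k + 1 := ⟨n - 1, (Nat.succ_pred_eq_of_pos hpos).symm⟩
    by_cases hw : v (Fin.last m) = 0
    · -- last generator is zero
      have hsnoc : Fin.snoc (fun i => v (Fin.castSucc i)) (0 : Fin (k+1) → ℝ) = v := by
        rw [← hw]
        exact Fin.snoc_init_self v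
      have hzon : zonotope v = zonotope (fun i => v (Fin.castSucc i)) := by
        conv_lhs => rw [← hsnoc]
        rw [zonotope_snoc_zero]
      rw [hzon, IH (k+1) hnm _, sum_split m k (Gz v)]
      have hzero : ∀ S ∈ powersetCard k (univ : Finset (Fin m)),
          Gz v (insert (Fin.last m) (S.map Fin.castSuccEmb)) = 0 := by
        intro S hS
        have hcS : S.card = k := (Finset.mem_powersetCard_univ).mp hS
        have hcard : (insert (Fin.last m) (S.map Fin.castSuccEmb)).card = k + 1 := by
          rw [Finset.card_insert_of_notMem (last_not_mem_map S), Finset.card_map, hcS]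
        rw [Gz_eq _ _ hcard,
          absDetCols_insert_last_zero v hw S (by omega) (by omega) hcard]
        simp
      rw [Finset.sum_congr rfl hzero, Finset.sum_const_zero, add_zero]
      apply Finset.sum_congr rfl
      intro S hS
      have hcS : S.card = k + 1 := (Finset.mem_powersetCard_univ).mp hS
      have hcm : (S.map Fin.castSuccEmb).card = k + 1 := by rw [Finset.card_map, hcS]
      rw [Gz_eq _ _ hcm, Gz_eq _ _ hcS, absDetCols_map v S hcS hcm]
    · -- last generator nonzero: change variables
      obtain ⟨g, hg⟩ := exists_equiv_mapsto k (v (Fin.last m)) hw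
      set v' : Fin (m+1) → (Fin (k+1) → ℝ) := fun i => g (v i) with hv'
      have hv'last : v' (Fin.last m) = elast k := by rw [hv']; simp only; rw [hg]
      -- formula for v'
      have hform' : volume (zonotope v') =
          ∑ S ∈ powersetCard (k+1) (univ : Finset (Fin (m+1))), Gz v' S := by
        have hsnoc : Fin.snoc (fun i => v' (Fin.castSucc i)) (elast k) = v' := by
          rw [← hv'last]
          exact Fin.snoc_init_self v'
        have h1 := volume_zonotope_snoc_elast k m (fun i => v' (Fin.castSucc i))
        rw [hsnoc] at h1
        rw [h1, IH (k+1) hnm _, IH k (le_trans (Nat.le_succ k) hnm) _,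
          sum_split m k (Gz v')]
        congr 1
        · apply Finset.sum_congr rfl
          intro S hS
          have hcS : S.card = k + 1 := (Finset.mem_powersetCard_univ).mp hS
          have hcm : (S.map Fin.castSuccEmb).card = k + 1 := by rw [Finset.card_map, hcS]
          rw [Gz_eq _ _ hcm, Gz_eq _ _ hcS, absDetCols_map v' S hcS hcm]
        · apply Finset.sum_congr rfl
          intro S hS
          have hcS : S.card = k := (Finset.mem_powersetCard_univ).mp hS
          have hcard : (insert (Fin.last m) (S.map Fin.castSuccEmb)).card = k + 1 := by
            rw [Finset.card_insert_of_notMem (last_not_mem_map S), Finset.card_map, hcS]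
          rw [Gz_eq _ _ hcard, Gz_eq _ _ hcS,
            absDetCols_insert_last v' hv'last S hcS hcard]
      -- transfer back to v
      have hgdet : LinearMap.det ((g.symm : (Fin (k+1) → ℝ) →ₗ[ℝ] (Fin (k+1) → ℝ))) *
          LinearMap.det ((g : (Fin (k+1) → ℝ) →ₗ[ℝ] (Fin (k+1) → ℝ))) = 1 := by
        rw [← LinearMap.det_comp]
        have : (g.symm : (Fin (k+1) → ℝ) →ₗ[ℝ] (Fin (k+1) → ℝ)) ∘ₗ
            (g : (Fin (k+1) → ℝ) →ₗ[ℝ] (Fin (k+1) → ℝ)) = LinearMap.id := by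
          ext x
          simp
        rw [this, LinearMap.det_id]
      have hzv : zonotope v = ⇑(g.symm : (Fin (k+1) → ℝ) →ₗ[ℝ] (Fin (k+1) → ℝ)) '' zonotope v' := by
        rw [← zonotope_image_linear]
        apply congrArg zonotope
        funext i
        rw [hv']
        simp
      rw [hzv, Measure.addHaar_image_linearMap, hform']
      have hGz : ∀ S ∈ powersetCard (k+1) (univ : Finset (Fin (m+1))),
          Gz v' S = ENNReal.ofReal |LinearMap.det ((g : (Fin (k+1) → ℝ) →ₗ[ℝ] (Fin (k+1) → ℝ)))| * Gz v S := by
        intro S hS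
        exact Gz_comp g v S ((Finset.mem_powersetCard_univ).mp hS)
      rw [Finset.sum_congr rfl hGz, ← Finset.mul_sum, ← mul_assoc,
        ← ENNReal.ofReal_mul (abs_nonneg _), ← abs_mul, hgdet]
      simp

theorem volume_zonotope {n m : ℕ} (hm : n ≤ m) (v : Fin m → (Fin n → ℝ)) :
    volume (zonotope v) =
      ∑ S ∈ (Finset.univ.powersetCard n).attach,
        ENNReal.ofReal
          (absDetCols v S.1 (Finset.mem_powersetCard.mp S.2).2) := by
  rw [key m n hm v, ← Finset.sum_attach (powersetCard n (univ : Finset (Fin m))) (Gz v)]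
  apply Finset.sum_congr rfl
  intro S _
  rw [Gz_eq _ _ (Finset.mem_powersetCard.mp S.2).2]
end

section
/- Main theorem (expected vertex count of a random hypercube slice): Let W be a k-dimensional subspace of ℝ^n, N = W^⊥, and P_N orthogonal projection onto N. Suppose P_N(C) has positive (n−k)-dimensional volume, where C = [-1,1]^n. For each (n−k)-dimensional face F of C, the probability that a flat τ + W intersects F, when τ is chosen uniformly from P_N(C) (with respect to (n−k)-dimensional Lebesgue measure on N), is vol_{n−k}(P_N(F))/vol_{n−k}(P_N(C)). Then the sum of these probabilities over all (n−k)-dimensional faces F equals 2^k; i.e., Σ_F vol_{n−k}(P_N(F)) = 2^k · vol_{n−k}(P_N(C)). -/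
open MeasureTheory Finset Set Module
open scoped Pointwise ENNReal

set_option linter.unusedSectionVars false
namespace ZP

def cub (ι : Type*) : Set (ι → ℝ) := {c | ∀ i, c i ∈ Set.Icc (-1:ℝ) 1}

lemma cub_eq (ι : Type*) : cub ι = Set.univ.pi (fun _ : ι => Set.Icc (-1:ℝ) 1) := by
  ext c; simp only [cub, Set.mem_setOf_eq, Set.mem_pi, Set.mem_univ, forall_true_left, Set.mem_Icc]

lemma convex_cub (ι : Type*) : Convex ℝ (cub ι) := by
  rw [cub_eq]; exact convex_pi fun i _ => convex_Icc _ _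

lemma isCompact_cub (ι : Type*) [Fintype ι] : IsCompact (cub ι) := by
  rw [cub_eq]; exact isCompact_univ_pi fun i => isCompact_Icc

lemma nonempty_cub (ι : Type*) : (cub ι).Nonempty := ⟨0, fun i => by simp [cub]⟩

variable {ι : Type*} [DecidableEq ι] {E F : Type*} [NormedAddCommGroup E] [NormedSpace ℝ E]
  [NormedAddCommGroup F] [NormedSpace ℝ F]

/-- linear combination map -/
def comb (s : Finset ι) (v : ι → E) : (ι → ℝ) →ₗ[ℝ] E where
  toFun c := ∑ i ∈ s, c i • v i
  map_add' a b := by simp [add_smul, Finset.sum_add_distrib]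
  map_smul' r a := by simp [Finset.smul_sum, smul_smul]

lemma comb_apply (s : Finset ι) (v : ι → E) (c : ι → ℝ) :
    comb s v c = ∑ i ∈ s, c i • v i := rfl

def zono (s : Finset ι) (v : ι → E) : Set E := comb s v '' cub ι

def seg (A : Set E) (u : E) : Set E :=
  (fun p : E × ℝ => p.1 + p.2 • u) '' (A ×ˢ Set.Icc (-1:ℝ) 1)

lemma mem_seg {A : Set E} {u x : E} :
    x ∈ seg A u ↔ ∃ a ∈ A, ∃ t ∈ Set.Icc (-1:ℝ) 1, x = a + t • u := by
  constructor
  · rintro ⟨⟨a, t⟩, ⟨ha, ht⟩, rfl⟩; exact ⟨a, ha, t, ht, rfl⟩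
  · rintro ⟨a, ha, t, ht, rfl⟩; exact ⟨⟨a, t⟩, ⟨ha, ht⟩, rfl⟩

lemma zono_nonempty (s : Finset ι) (v : ι → E) : (zono s v).Nonempty :=
  (nonempty_cub ι).image _

lemma zono_convex (s : Finset ι) (v : ι → E) : Convex ℝ (zono s v) :=
  (convex_cub ι).linear_image _

lemma comb_continuous (s : Finset ι) (v : ι → E) : Continuous (comb s v) := by
  simp only [comb, LinearMap.coe_mk, AddHom.coe_mk]
  exact continuous_finset_sum _ fun i _ => (continuous_apply i).smul continuous_const

lemma zono_isCompact [Fintype ι] (s : Finset ι) (v : ι → E) : IsCompact (zono s v) :=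
  (isCompact_cub ι).image (comb_continuous s v)

lemma map_zono (L : E →ₗ[ℝ] F) (s : Finset ι) (v : ι → E) :
    L '' zono s v = zono s (fun i => L (v i)) := by
  rw [zono, zono, ← Set.image_comp]
  apply Set.image_congr
  intro c _
  simp [comb_apply, map_sum, _root_.map_smul]

lemma map_seg (L : E →ₗ[ℝ] F) (A : Set E) (u : E) :
    L '' seg A u = seg (L '' A) (L u) := by
  ext x
  simp only [mem_image, mem_seg]
  constructor
  · rintro ⟨y, ⟨a, ha, t, ht, rfl⟩, rfl⟩
    exact ⟨L a, ⟨a, ha, rfl⟩, t, ht, by simp [_root_.map_smul]⟩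
  · rintro ⟨la, ⟨a, ha, rfl⟩, t, ht, rfl⟩
    exact ⟨a + t • u, ⟨a, ha, t, ht, rfl⟩, by simp [_root_.map_smul]⟩

lemma seg_zero {A : Set E} (hA : A.Nonempty) : seg A 0 = A := by
  ext x
  simp only [mem_seg, smul_zero, add_zero]
  constructor
  · rintro ⟨a, ha, t, _, rfl⟩; exact ha
  · intro hx; exact ⟨x, hx, 0, by norm_num, rfl⟩

lemma zono_insert {a : ι} {s : Finset ι} (ha : a ∉ s) (v : ι → E) :
    zono (insert a s) v = seg (zono s v) (v a) := by
  ext x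
  simp only [zono, mem_image, mem_seg]
  constructor
  · rintro ⟨c, hc, rfl⟩
    refine ⟨comb s v c, ⟨c, hc, rfl⟩, c a, hc a, ?_⟩
    rw [comb_apply, comb_apply, Finset.sum_insert ha, add_comm]
  · rintro ⟨y, ⟨c, hc, rfl⟩, t, ht, rfl⟩
    refine ⟨Function.update c a t, ?_, ?_⟩
    · intro i
      rcases eq_or_ne i a with rfl | hi
      · simpa using ht
      · simpa [Function.update_of_ne hi] using hc i
    · rw [comb_apply, Finset.sum_insert ha, Function.update_self, add_comm]
      congr 1
      apply Finset.sum_congr rfl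
      intro i hi
      rw [Function.update_of_ne (by rintro rfl; exact ha hi)]

lemma zono_subset_span (s : Finset ι) (v : ι → E) :
    zono s v ⊆ (Submodule.span ℝ (v '' s) : Set E) := by
  rintro x ⟨c, _, rfl⟩
  rw [comb_apply]
  exact Submodule.sum_smul_mem _ _ fun i hi =>
    Submodule.subset_span ⟨i, hi, rfl⟩

lemma zono_lowdim {d : ℕ} [Fintype ι] {s : Finset ι} (hs : s.card < d)
    (v : ι → (Fin d → ℝ)) : volume (zono s v) = 0 := by
  have h1 : volume (zono s v) ≤ volume ((Submodule.span ℝ (v '' s) : Set (Fin d → ℝ))) :=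
    measure_mono (zono_subset_span s v)
  have h2 : Submodule.span ℝ (v '' s) ≠ ⊤ := by
    intro h
    have : finrank ℝ (Submodule.span ℝ (v '' s)) ≤ s.card := by
      have : v '' s = ((s.image v : Finset (Fin d → ℝ)) : Set (Fin d → ℝ)) := by
        simp [Finset.coe_image]
      rw [this]
      exact le_trans (finrank_span_finset_le_card _) (Finset.card_image_le)
    rw [h] at this
    have hd : finrank ℝ (Fin d → ℝ) = d := by simp
    rw [finrank_top, hd] at this
    omega
  rw [MeasureTheory.Measure.addHaar_submodule _ _ h2] at h1
  exact le_antisymm h1 zero_le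
variable {m : ℕ}

/-- non-dependent `insertNth` -/
def ins (j : Fin (m+1)) (t : ℝ) (y : Fin m → ℝ) : Fin (m+1) → ℝ := j.insertNth t y

@[simp] lemma ins_apply_same (j : Fin (m+1)) (t : ℝ) (y : Fin m → ℝ) : ins j t y j = t :=
  Fin.insertNth_apply_same (α := fun _ => ℝ) j t y

@[simp] lemma ins_apply_succAbove (j : Fin (m+1)) (t : ℝ) (y : Fin m → ℝ) (i : Fin m) :
    ins j t y (j.succAbove i) = y i := Fin.insertNth_apply_succAbove (α := fun _ => ℝ) j t y i

@[simp] lemma removeNth_ins (j : Fin (m+1)) (t : ℝ) (y : Fin m → ℝ) :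
    j.removeNth (ins j t y) = y := Fin.removeNth_insertNth (α := fun _ => ℝ) j t y

@[simp] lemma ins_self (j : Fin (m+1)) (x : Fin (m+1) → ℝ) :
    ins j (x j) (j.removeNth x) = x := Fin.insertNth_self_removeNth (α := fun _ => ℝ) j x

/-- slice of a set in direction `j` over base point `y` -/
def sl (j : Fin (m+1)) (S : Set (Fin (m+1) → ℝ)) (y : Fin m → ℝ) : Set ℝ :=
  {t | ins j t y ∈ S}

lemma mem_sl {j : Fin (m+1)} {S : Set (Fin (m+1) → ℝ)} {y : Fin m → ℝ} {t : ℝ} :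
    t ∈ sl j S y ↔ ins j t y ∈ S := Iff.rfl

lemma preimage_eq_sl (j : Fin (m+1)) (S : Set (Fin (m+1) → ℝ)) (y : Fin m → ℝ) :
    (fun t => (t, y)) ⁻¹' ((MeasurableEquiv.piFinSuccAbove (fun _ : Fin (m+1) => ℝ) j).symm ⁻¹' S)
      = sl j S y := by
  ext t
  simp only [Set.mem_preimage, MeasurableEquiv.piFinSuccAbove_symm_apply]
  exact Iff.rfl

lemma vol_eq_lintegral_sl (j : Fin (m+1)) {S : Set (Fin (m+1) → ℝ)} (hS : MeasurableSet S) :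
    volume S = ∫⁻ y, volume (sl j S y) := by
  set e := MeasurableEquiv.piFinSuccAbove (fun _ : Fin (m+1) => ℝ) j with he
  have vp := volume_preserving_piFinSuccAbove (fun _ : Fin (m+1) => ℝ) j
  have h1 : volume (e.symm ⁻¹' S) = volume S :=
    (vp.symm e).measure_preimage hS.nullMeasurableSet
  rw [← h1, Measure.volume_eq_prod, Measure.prod_apply_symm (e.symm.measurable hS)]
  congr 1


lemma measurable_vol_sl (j : Fin (m+1)) {S : Set (Fin (m+1) → ℝ)} (hS : MeasurableSet S) :
    Measurable fun y => volume (sl j S y) := by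
  have := measurable_measure_prodMk_right (μ := (volume : Measure ℝ))
    (s := (MeasurableEquiv.piFinSuccAbove (fun _ : Fin (m+1) => ℝ) j).symm ⁻¹' S)
    ((MeasurableEquiv.piFinSuccAbove (fun _ : Fin (m+1) => ℝ) j).symm.measurable hS)
  simpa only [preimage_eq_sl] using this

def sing (j : Fin (m+1)) : Fin (m+1) → ℝ := Pi.single j 1

@[simp] lemma sing_apply_same (j : Fin (m+1)) : sing j j = 1 := by simp [sing]

@[simp] lemma sing_apply_succAbove (j : Fin (m+1)) (i : Fin m) : sing j (j.succAbove i) = 0 := by rw [sing, Pi.single_eq_of_ne (Fin.succAbove_ne j i)]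

lemma ins_add_single (j : Fin (m+1)) (t r : ℝ) (y : Fin m → ℝ) :
    ins j t y + r • sing j = ins j (t + r) y := by
  funext l
  rcases eq_or_ne l j with rfl | hl
  · simp only [Pi.add_apply, Pi.smul_apply, smul_eq_mul, ins_apply_same, sing_apply_same]
    ring
  · obtain ⟨i, rfl⟩ := Fin.exists_succAbove_eq hl
    simp only [Pi.add_apply, Pi.smul_apply, smul_eq_mul, ins_apply_succAbove, sing_apply_succAbove]
    ring

lemma sl_seg_single (j : Fin (m+1)) (A : Set (Fin (m+1) → ℝ)) (y : Fin m → ℝ) :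
    sl j (seg A (sing j)) y = sl j A y + Set.Icc (-1:ℝ) 1 := by
  ext t
  simp only [mem_sl, mem_seg, Set.mem_add]
  constructor
  · rintro ⟨a, ha, r, hr, hEq⟩
    have hy : y = j.removeNth a := by
      have h2 := congrArg (Fin.removeNth j) hEq
      rw [removeNth_ins] at h2
      rw [h2, show a + r • sing j = ins j (a j + r) (j.removeNth a) by
        rw [← ins_add_single]; simp, removeNth_ins]
    have hta : t = a j + r := by
      have h3 := congrArg (fun x => x j) hEq
      simpa using h3
    refine ⟨a j, ?_, r, hr, hta.symm⟩
    show ins j (a j) y ∈ A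
    rw [hy, ins_self]
    exact ha
  · rintro ⟨p, hp, q, hq, rfl⟩
    exact ⟨ins j p y, hp, q, hq, by rw [ins_add_single]⟩

lemma ins_combo (j : Fin (m+1)) (t1 t2 θ θ' : ℝ) (hθθ : θ + θ' = 1) (y : Fin m → ℝ) :
    ins j (θ*t1+θ'*t2) y = θ • ins j t1 y + θ' • ins j t2 y := by
  funext l
  rcases eq_or_ne l j with rfl | hl
  · simp
  · obtain ⟨i, rfl⟩ := Fin.exists_succAbove_eq hl
    simp only [Pi.add_apply, Pi.smul_apply, ins_apply_succAbove, smul_eq_mul]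
    rw [← add_mul, hθθ, one_mul]

lemma sl_convex (j : Fin (m+1)) {A : Set (Fin (m+1) → ℝ)} (hA : Convex ℝ A) (y : Fin m → ℝ) :
    Convex ℝ (sl j A y) := by
  intro t1 h1 t2 h2 θ θ' hθ hθ' hθθ
  rw [mem_sl, smul_eq_mul, smul_eq_mul, ins_combo j t1 t2 θ θ' hθθ y]
  exact hA h1 h2 hθ hθ' hθθ

lemma continuous_ins_fst (j : Fin (m+1)) (y : Fin m → ℝ) :
    Continuous fun t : ℝ => ins j t y := by
  refine continuous_pi fun l => ?_
  rcases eq_or_ne l j with rfl | hl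
  · simpa using continuous_id'
  · obtain ⟨i, rfl⟩ := Fin.exists_succAbove_eq hl
    simpa using continuous_const

lemma sl_isCompact (j : Fin (m+1)) {A : Set (Fin (m+1) → ℝ)} (hK : IsCompact A)
    (y : Fin m → ℝ) : IsCompact (sl j A y) := by
  have hclosed : IsClosed (sl j A y) := hK.isClosed.preimage (continuous_ins_fst j y)
  obtain ⟨C, hC⟩ := isBounded_iff_forall_norm_le.1 hK.isBounded
  refine Metric.isCompact_of_isClosed_isBounded hclosed ?_
  refine (Metric.isBounded_Icc (-C) C).subset fun t ht => ?_
  have h1 : ‖(ins j t y) j‖ ≤ C := le_trans (norm_le_pi_norm _ j) (hC _ ht)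
  rw [ins_apply_same, Real.norm_eq_abs] at h1
  exact abs_le.1 h1

lemma cc_interval {K : Set ℝ} (hK : IsCompact K) (hc : Convex ℝ K) (hne : K.Nonempty) :
    K = Set.Icc (sInf K) (sSup K) := by
  apply Set.Subset.antisymm
  · intro x hx
    exact ⟨csInf_le hK.bddBelow hx, le_csSup hK.bddAbove hx⟩
  · exact hc.ordConnected.out (hK.sInf_mem hne) (hK.sSup_mem hne)

lemma continuous_removeNth (j : Fin (m+1)) :
    Continuous (Fin.removeNth j : (Fin (m+1) → ℝ) → (Fin m → ℝ)) :=
  continuous_pi fun _ => continuous_apply _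

lemma sl_nonempty_iff (j : Fin (m+1)) (A : Set (Fin (m+1) → ℝ)) (y : Fin m → ℝ) :
    (sl j A y).Nonempty ↔ y ∈ Fin.removeNth j '' A := by
  constructor
  · rintro ⟨t, ht⟩
    exact ⟨ins j t y, ht, removeNth_ins j t y⟩
  · rintro ⟨a, ha, rfl⟩
    refine ⟨a j, ?_⟩
    rw [mem_sl, ins_self]
    exact ha

/-- Key Fubini step: volume of a convex compact set plus a coordinate segment. -/
lemma vol_seg_single (j : Fin (m+1)) {A : Set (Fin (m+1) → ℝ)} (hA : Convex ℝ A)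
    (hK : IsCompact A) :
    volume (seg A (sing j)) = volume A + 2 * volume (Fin.removeNth j '' A) := by
  have hBcomp : IsCompact (seg A (sing j)) := by
    apply (hK.prod isCompact_Icc).image
    exact (continuous_fst.add (continuous_snd.smul continuous_const))
  have hBmeas : MeasurableSet (seg A (sing j)) := hBcomp.isClosed.measurableSet
  have hAmeas : MeasurableSet A := hK.isClosed.measurableSet
  have hImMeas : MeasurableSet (Fin.removeNth j '' A) :=
    (hK.image (continuous_removeNth j)).isClosed.measurableSet
  rw [vol_eq_lintegral_sl j hBmeas]
  have key : ∀ y, volume (sl j (seg A (sing j)) y)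
      = volume (sl j A y) + (Fin.removeNth j '' A).indicator (fun _ => (2:ℝ≥0∞)) y := by
    intro y
    rw [sl_seg_single]
    by_cases hy : y ∈ Fin.removeNth j '' A
    · have hne : (sl j A y).Nonempty := (sl_nonempty_iff j A y).2 hy
      have hKy := sl_isCompact j hK y
      have hint := cc_interval hKy (sl_convex j hA y) hne
      have hab : sInf (sl j A y) ≤ sSup (sl j A y) := by
        obtain ⟨t, ht⟩ := hne
        exact le_trans (csInf_le hKy.bddBelow ht) (le_csSup hKy.bddAbove ht)
      rw [Set.indicator_of_mem hy, hint, Set.Icc_add_Icc hab (by norm_num), Real.volume_Icc,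
        Real.volume_Icc]
      rw [show sSup (sl j A y) + 1 - (sInf (sl j A y) + -1)
        = (sSup (sl j A y) - sInf (sl j A y)) + 2 by ring]
      rw [ENNReal.ofReal_add (by linarith) (by norm_num)]
      norm_num
    · have hem : sl j A y = ∅ := by
        rw [← Set.not_nonempty_iff_eq_empty]
        exact fun h => hy ((sl_nonempty_iff j A y).1 h)
      rw [Set.indicator_of_notMem hy, hem, Set.empty_add]
      simp
  calc ∫⁻ y, volume (sl j (seg A (sing j)) y)
      = ∫⁻ y, (volume (sl j A y) + (Fin.removeNth j '' A).indicator (fun _ => (2:ℝ≥0∞)) y) := by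
        congr 1; funext y; exact key y
    _ = (∫⁻ y, volume (sl j A y)) + ∫⁻ y, (Fin.removeNth j '' A).indicator (fun _ => (2:ℝ≥0∞)) y :=
        lintegral_add_left (measurable_vol_sl j hAmeas) _
    _ = volume A + 2 * volume (Fin.removeNth j '' A) := by
        rw [← vol_eq_lintegral_sl j hAmeas, lintegral_indicator_const hImMeas]
/-! ### Shear transforms -/

noncomputable def shearL (u : Fin (m+1) → ℝ) (j : Fin (m+1)) : (Fin (m+1) → ℝ) →ₗ[ℝ] (Fin (m+1) → ℝ) :=
  LinearMap.id + (LinearMap.proj j).smulRight (u - sing j)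

lemma shearL_apply (u : Fin (m+1) → ℝ) (j : Fin (m+1)) (x : Fin (m+1) → ℝ) :
    shearL u j x = x + x j • (u - sing j) := rfl

lemma shearL_sing (u : Fin (m+1) → ℝ) (j : Fin (m+1)) : shearL u j (sing j) = u := by
  rw [shearL_apply]
  simp

noncomputable def shearInvVec (u : Fin (m+1) → ℝ) (j : Fin (m+1)) : Fin (m+1) → ℝ :=
  (u j)⁻¹ • (sing j - u) + sing j

lemma shearL_inv_left (u : Fin (m+1) → ℝ) (j : Fin (m+1)) (hj : u j ≠ 0) (x : Fin (m+1) → ℝ) :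
    shearL (shearInvVec u j) j (shearL u j x) = x := by
  rw [shearL_apply, shearL_apply]
  have hxj : (x + x j • (u - sing j)) j = x j * u j := by
    simp only [Pi.add_apply, Pi.smul_apply, Pi.sub_apply, sing_apply_same, smul_eq_mul]
    ring
  rw [hxj, show shearInvVec u j - sing j = (u j)⁻¹ • (sing j - u) by
    rw [shearInvVec]; abel]
  rw [smul_smul, show x j * u j * (u j)⁻¹ = x j by field_simp]
  rw [smul_sub, smul_sub]
  abel

lemma shearL_inv_right (u : Fin (m+1) → ℝ) (j : Fin (m+1)) (hj : u j ≠ 0) (y : Fin (m+1) → ℝ) :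
    shearL u j (shearL (shearInvVec u j) j y) = y := by
  rw [shearL_apply, shearL_apply]
  have h1 : shearInvVec u j - sing j = (u j)⁻¹ • (sing j - u) := by
    rw [shearInvVec]; abel
  rw [h1, smul_smul]
  have hyj : (y + (y j * (u j)⁻¹) • (sing j - u)) j = y j * (u j)⁻¹ := by
    simp only [Pi.add_apply, Pi.smul_apply, Pi.sub_apply, sing_apply_same, smul_eq_mul]
    field_simp
    ring
  rw [hyj, smul_sub, smul_sub]
  abel

/-- shear equivalence sending `sing j` to `u` -/
noncomputable def shear (u : Fin (m+1) → ℝ) (j : Fin (m+1)) (hj : u j ≠ 0) :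
    (Fin (m+1) → ℝ) ≃ₗ[ℝ] (Fin (m+1) → ℝ) :=
  LinearEquiv.ofLinear (shearL u j) (shearL (shearInvVec u j) j)
    (LinearMap.ext fun y => shearL_inv_right u j hj y)
    (LinearMap.ext fun x => shearL_inv_left u j hj x)

lemma shear_apply (u : Fin (m+1) → ℝ) (j : Fin (m+1)) (hj : u j ≠ 0) (x : Fin (m+1) → ℝ) :
    shear u j hj x = shearL u j x := rfl

lemma det_shearL (u : Fin (m+1) → ℝ) (j : Fin (m+1)) : LinearMap.det (shearL u j) = u j := by
  rw [← LinearMap.det_toMatrix']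
  have hM : LinearMap.toMatrix' (shearL u j)
      = (1 : Matrix (Fin (m+1)) (Fin (m+1)) ℝ).updateCol j u := by
    ext i l
    rw [LinearMap.toMatrix'_apply, Matrix.updateCol_apply, shearL_apply]
    rcases eq_or_ne l j with rfl | hl
    · simp only [Pi.add_apply, Pi.smul_apply, Pi.sub_apply, smul_eq_mul, sing, Pi.single_apply,
        eq_self_iff_true, if_true]
      split_ifs <;> ring
    · simp only [if_neg hl, Matrix.one_apply, Pi.add_apply, Pi.smul_apply, Pi.sub_apply,
        smul_eq_mul, sing, Pi.single_apply]
      have hjl : ¬ (j = l) := fun h => hl h.symm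
      simp only [if_neg hjl]
      split_ifs <;> ring
  rw [hM]
  have := Matrix.cramer_apply (1 : Matrix (Fin (m+1)) (Fin (m+1)) ℝ) u j
  rw [← this, Matrix.cramer_one]
  rfl

lemma vol_image_shear (u : Fin (m+1) → ℝ) (j : Fin (m+1)) (hj : u j ≠ 0)
    (S : Set (Fin (m+1) → ℝ)) :
    volume (shear u j hj '' S) = ENNReal.ofReal |u j| * volume S := by
  have : (shear u j hj '' S) = (shearL u j) '' S := rfl
  rw [this, MeasureTheory.Measure.addHaar_image_linearMap, det_shearL]

lemma shear_image_symm_image (u : Fin (m+1) → ℝ) (j : Fin (m+1)) (hj : u j ≠ 0)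
    (A : Set (Fin (m+1) → ℝ)) : shear u j hj '' ((shear u j hj).symm '' A) = A := by
  rw [← Set.image_comp]
  have : (⇑(shear u j hj) ∘ ⇑(shear u j hj).symm) = id := by
    funext x
    simp
  rw [this, Set.image_id]

/-- Volume of a convex compact set plus an arbitrary (non-degenerate) segment. -/
lemma vol_seg (u : Fin (m+1) → ℝ) {j : Fin (m+1)} (hj : u j ≠ 0) {A : Set (Fin (m+1) → ℝ)}
    (hA : Convex ℝ A) (hK : IsCompact A) :
    volume (seg A u) = volume A
      + 2 * ENNReal.ofReal |u j| * volume (Fin.removeNth j '' ((shear u j hj).symm '' A)) := by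
  set T := shear u j hj with hT
  set A' := T.symm '' A with hA'
  have hA'conv : Convex ℝ A' := hA.linear_image T.symm.toLinearMap
  have hA'comp : IsCompact A' := hK.image T.symm.toLinearMap.continuous_of_finiteDimensional
  have h1 : seg A u = T '' (seg A' (sing j)) := by
    have : (T : (Fin (m+1) → ℝ) →ₗ[ℝ] (Fin (m+1) → ℝ)) '' (seg A' (sing j))
        = seg ((T : (Fin (m+1) → ℝ) →ₗ[ℝ] _) '' A') ((T : (Fin (m+1) → ℝ) →ₗ[ℝ] _) (sing j)) :=
      map_seg _ _ _
    have hc : ((T : (Fin (m+1) → ℝ) →ₗ[ℝ] (Fin (m+1) → ℝ)) : (Fin (m+1) → ℝ) → _) = ⇑T := rfl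
    rw [hc] at this
    rw [this, shear_image_symm_image]
    congr 1
    rw [shear_apply, shearL_sing]
  have h2 : volume (seg A u) = ENNReal.ofReal |u j| * volume (seg A' (sing j)) := by
    rw [h1, vol_image_shear]
  have h3 := vol_seg_single j hA'conv hA'comp
  have h4 : ENNReal.ofReal |u j| * volume A' = volume A := by
    rw [← vol_image_shear u j hj A', shear_image_symm_image]
  rw [h2, h3, mul_add, h4]
  ring
/-! ### The key identity: volume of a zonotope = sum of volumes of sub-zonotopes -/

lemma zono_empty {ι : Type*} [DecidableEq ι] {d : ℕ} (v : ι → (Fin d → ℝ)) :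
    zono (∅ : Finset ι) v = {0} := by
  ext x
  simp only [zono, Set.mem_image, comb_apply, Finset.sum_empty, Set.mem_singleton_iff]
  constructor
  · rintro ⟨c, _, rfl⟩; rfl
  · rintro rfl; exact ⟨0, fun i => by simp [cub], rfl⟩

lemma vol_singleton_zero {d : ℕ} (hd : 0 < d) : volume ({0} : Set (Fin d → ℝ)) = 0 := by
  haveI : Nonempty (Fin d) := ⟨⟨0, hd⟩⟩
  have h := MeasureTheory.Measure.addHaar_submodule (volume : Measure (Fin d → ℝ)) ⊥
    bot_ne_top
  rwa [Submodule.bot_coe] at h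

lemma subsingleton_set_univ {A : Set (Fin 0 → ℝ)} (h : A.Nonempty) : A = Set.univ := by
  obtain ⟨w, hw⟩ := h
  exact Set.eq_univ_of_forall fun x => (Subsingleton.elim w x) ▸ hw

lemma vol_zono_sum {ι : Type*} [Fintype ι] [DecidableEq ι] (s : Finset ι) :
    ∀ (d : ℕ) (v : ι → (Fin d → ℝ)),
      volume (zono s v) = ∑ S ∈ s.powersetCard d, volume (zono S v) := by
  induction s using Finset.induction_on with
  | empty =>
    intro d v
    rcases Nat.eq_zero_or_pos d with rfl | hd
    · rw [Finset.powersetCard_zero, Finset.sum_singleton]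
    · rw [zono_empty, vol_singleton_zero hd,
        Finset.powersetCard_eq_empty.2 (by simp; omega), Finset.sum_empty]
  | insert a s ha IH =>
    intro d v
    rcases Nat.eq_zero_or_pos d with rfl | hd
    · rw [Finset.powersetCard_zero, Finset.sum_singleton,
        subsingleton_set_univ (zono_nonempty _ _), subsingleton_set_univ (zono_nonempty _ _)]
    · obtain ⟨m, rfl⟩ : ∃ m, d = m + 1 := ⟨d - 1, by omega⟩
      have hinj : ∀ x ∈ s.powersetCard m, ∀ y ∈ s.powersetCard m,
          insert a x = insert a y → x = y := by
        intro x hx y hy h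
        have hax : a ∉ x := fun hc => ha ((Finset.mem_powersetCard.1 hx).1 hc)
        have hay : a ∉ y := fun hc => ha ((Finset.mem_powersetCard.1 hy).1 hc)
        rw [← Finset.erase_insert hax, h, Finset.erase_insert hay]
      have hdis : Disjoint (s.powersetCard (m+1)) ((s.powersetCard m).image (insert a)) := by
        rw [Finset.disjoint_left]
        intro S hS hS'
        obtain ⟨S', hS'mem, rfl⟩ := Finset.mem_image.1 hS'
        exact ha ((Finset.mem_powersetCard.1 hS).1 (Finset.mem_insert_self a S'))
      by_cases hu : v a = 0
      · have hz : ∀ S' ∈ s.powersetCard m, volume (zono (insert a S') v) = 0 := by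
          intro S' hS'
          have haS' : a ∉ S' := fun hc => ha ((Finset.mem_powersetCard.1 hS').1 hc)
          rw [zono_insert haS', hu, seg_zero (zono_nonempty _ _)]
          exact zono_lowdim (by rw [(Finset.mem_powersetCard.1 hS').2]; omega) v
        rw [zono_insert ha, hu, seg_zero (zono_nonempty _ _), IH (m+1) v,
          Finset.powersetCard_succ_insert ha, Finset.sum_union hdis, Finset.sum_image hinj,
          Finset.sum_congr rfl hz, Finset.sum_const, smul_zero, add_zero]
      · obtain ⟨j, hj⟩ := Function.ne_iff.1 hu
        set T := shear (v a) j hj with hT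
        set R : (Fin (m+1) → ℝ) →ₗ[ℝ] (Fin m → ℝ) :=
          (LinearMap.funLeft ℝ ℝ (j.succAbove)).comp T.symm.toLinearMap with hR
        set w : ι → (Fin m → ℝ) := fun i => R (v i) with hw
        have himg : ∀ S : Finset ι, Fin.removeNth j '' (T.symm '' (zono S v)) = zono S w := by
          intro S
          have h1 : Fin.removeNth j '' (T.symm '' (zono S v)) = R '' (zono S v) := by
            rw [← Set.image_comp]
            rfl
          rw [h1, map_zono]
        have key : ∀ S : Finset ι, a ∉ S → volume (zono (insert a S) v)
            = volume (zono S v) + 2 * ENNReal.ofReal |v a j| * volume (zono S w) := by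
          intro S hS
          rw [zono_insert hS, vol_seg (v a) hj (zono_convex S v) (zono_isCompact S v), himg]
        have hterm : ∀ S' ∈ s.powersetCard m, volume (zono (insert a S') v)
            = 2 * ENNReal.ofReal |v a j| * volume (zono S' w) := by
          intro S' hS'
          have haS' : a ∉ S' := fun hc => ha ((Finset.mem_powersetCard.1 hS').1 hc)
          rw [key S' haS',
            zono_lowdim (by rw [(Finset.mem_powersetCard.1 hS').2]; omega) v, zero_add]
        rw [key s ha, IH (m+1) v, IH m w, Finset.mul_sum,
          Finset.powersetCard_succ_insert ha, Finset.sum_union hdis, Finset.sum_image hinj,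
          Finset.sum_congr rfl hterm]
/-! ### cube images -/

lemma zono_def {ι : Type*} [DecidableEq ι] {E : Type*} [NormedAddCommGroup E] [NormedSpace ℝ E]
    (s : Finset ι) (v : ι → E) : zono s v = ⇑(comb s v) '' cub ι := rfl

lemma image_cub_eq_zono {n : ℕ} {F : Type*} [NormedAddCommGroup F] [NormedSpace ℝ F]
    (M : (Fin n → ℝ) →ₗ[ℝ] F) :
    ⇑M '' cub (Fin n) = zono (Finset.univ : Finset (Fin n)) (fun i => M (Pi.single i 1)) := by
  rw [zono_def]
  apply Set.image_congr
  intro c _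
  conv_lhs => rw [show c = ∑ i : Fin n, Pi.single i (c i) from (Finset.univ_sum_single c).symm]
  rw [map_sum, comb_apply]
  apply Finset.sum_congr rfl
  intro i _
  rw [← _root_.map_smul]
  congr 1
  funext l
  rcases eq_or_ne l i with rfl | hl
  · simp
  · simp [Pi.single_eq_of_ne hl]

lemma sum_single_apply {n : ℕ} (s : Finset (Fin n)) (c : Fin n → ℝ) (l : Fin n) :
    (∑ i ∈ s, c i • (Pi.single i 1 : Fin n → ℝ)) l = if l ∈ s then c l else 0 := by
  rw [Finset.sum_apply]
  rw [Finset.sum_congr rfl (g := fun i => if l = i then c i else 0) (fun i _ => by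
    rcases eq_or_ne l i with rfl | hl
    · simp
    · simp [Pi.single_eq_of_ne (fun h => hl h.symm), hl])]
  exact Finset.sum_ite_eq s l c

lemma comb_single_apply {n : ℕ} (s : Finset (Fin n)) (cc : Fin n → ℝ) (l : Fin n) :
    (comb s (fun i => (Pi.single i 1 : Fin n → ℝ)) cc) l = if l ∈ s then cc l else 0 := by
  rw [comb_apply]
  exact sum_single_apply s cc l
end ZP
/-- The face of the cube `[-1,1]^n ⊆ ℝ^n` obtained by fixing, for each `j ∈ J`, the
`j`-th coordinate to `+1` or `-1` according to the sign `ε j`. -/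
def cubeFace {n : ℕ} (J : Finset (Fin n)) (ε : J → Bool) :
    Set (EuclideanSpace ℝ (Fin n)) :=
  {x | (∀ i, x i ∈ Set.Icc (-1 : ℝ) 1) ∧
    ∀ j (hj : j ∈ J), x j = if ε ⟨j, hj⟩ then 1 else -1}

theorem expected_vertices_of_hypercube_slice {n k : ℕ} (hk : k ≤ n)
    (W : Submodule ℝ (EuclideanSpace ℝ (Fin n)))
    (hW : Module.finrank ℝ W = k)
    (P : EuclideanSpace ℝ (Fin n) → EuclideanSpace ℝ (Fin n))
    (hP : P = fun x => (Submodule.orthogonalProjectionOnto Wᗮ x : EuclideanSpace ℝ (Fin n)))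
    (hpos : 0 < μH[(n - k : ℕ)]
      (P '' {x : EuclideanSpace ℝ (Fin n) | ∀ i, x i ∈ Set.Icc (-1 : ℝ) 1})) :
    ∑ J ∈ Finset.univ.powersetCard k, ∑ ε : J → Bool,
        μH[(n - k : ℕ)] (P '' cubeFace J ε) =
      2 ^ k * μH[(n - k : ℕ)]
        (P '' {x : EuclideanSpace ℝ (Fin n) | ∀ i, x i ∈ Set.Icc (-1 : ℝ) 1}) := by
  classical
  clear hpos
  set dd : ℕ := n - k with hdd
  set C : Set (EuclideanSpace ℝ (Fin n)) := {x | ∀ i, x i ∈ Set.Icc (-1 : ℝ) 1} with hC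
  set N := Wᗮ with hNdef
  have hN : Module.finrank ℝ N = dd := by
    have h := Submodule.finrank_add_finrank_orthogonal (K := W)
    rw [hW, finrank_euclideanSpace_fin] at h
    have hNW : Module.finrank ℝ ↥N = Module.finrank ℝ ↥Wᗮ := rfl
    omega
  set e₁ : ↥N ≃ₗᵢ[ℝ] EuclideanSpace ℝ (Fin dd) :=
    (stdOrthonormalBasis ℝ ↥N).repr.trans
      (LinearIsometryEquiv.piLpCongrLeft 2 ℝ ℝ (finCongr hN)) with he₁
  set f : EuclideanSpace ℝ (Fin dd) →ₗᵢ[ℝ] EuclideanSpace ℝ (Fin n) :=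
    N.subtypeₗᵢ.comp e₁.symm.toLinearIsometry with hf
  set L : EuclideanSpace ℝ (Fin n) →ₗ[ℝ] EuclideanSpace ℝ (Fin dd) :=
    (e₁.toLinearEquiv.toLinearMap).comp ((N.orthogonalProjectionOnto).toLinearMap) with hL
  have hfL : ∀ x, f (L x) = P x := by
    intro x
    show (↑(e₁.symm (e₁ ((N.orthogonalProjectionOnto) x))) : EuclideanSpace ℝ (Fin n)) = P x
    rw [LinearIsometryEquiv.symm_apply_apply, hP]
  haveI hHaar : (μH[(dd : ℝ)] : Measure (EuclideanSpace ℝ (Fin dd))).IsAddHaarMeasure := by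
    have hcast : ((dd : ℕ) : ℝ)
        = ((Module.finrank ℝ (EuclideanSpace ℝ (Fin dd)) : ℕ) : ℝ) := by
      rw [finrank_euclideanSpace_fin]
    rw [hcast]
    infer_instance
  obtain ⟨c, hc⟩ : ∃ c : ℝ≥0∞,
      (μH[(dd : ℝ)] : Measure (EuclideanSpace ℝ (Fin dd))) = c • volume :=
    ⟨_, MeasureTheory.Measure.isAddLeftInvariant_eq_smul _ _⟩
  set Λ : EuclideanSpace ℝ (Fin n) →ₗ[ℝ] (Fin dd → ℝ) :=
    ((WithLp.linearEquiv 2 ℝ (Fin dd → ℝ)).toLinearMap).comp L with hΛ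
  have HT : ∀ X : Set (EuclideanSpace ℝ (Fin n)), IsCompact X →
      μH[(dd : ℝ)] (P '' X) = c * volume (⇑Λ '' X) := by
    intro X hX
    have h1 : P '' X = ⇑f '' (⇑L '' X) := by
      rw [← Set.image_comp]
      exact Set.image_congr (fun x _ => (hfL x).symm)
    have h2 : μH[(dd : ℝ)] (⇑f '' (⇑L '' X)) = μH[(dd : ℝ)] (⇑L '' X) :=
      f.isometry.hausdorffMeasure_image (Or.inl (by positivity)) _
    have hLX : IsCompact (⇑L '' X) := hX.image L.continuous_of_finiteDimensional
    have h3 : volume (⇑L '' X) = volume (⇑Λ '' X) := by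
      have h4 : ⇑Λ '' X = ⇑(MeasurableEquiv.toLp 2 (Fin dd → ℝ)).symm '' (⇑L '' X) := by
        rw [← Set.image_comp]; rfl
      have h5 := ((EuclideanSpace.volume_preserving_symm_measurableEquiv_toLp (Fin dd)).symm
        (MeasurableEquiv.toLp 2 (Fin dd → ℝ)).symm).measure_preimage
        (hLX.isClosed.measurableSet.nullMeasurableSet)
      rw [h4, MeasurableEquiv.image_eq_preimage_symm]
      exact h5.symm
    rw [h1, h2, hc, Measure.smul_apply, smul_eq_mul, h3]
  set gE : (Fin n → ℝ) →ₗ[ℝ] EuclideanSpace ℝ (Fin n) :=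
    (WithLp.linearEquiv 2 ℝ (Fin n → ℝ)).symm.toLinearMap with hgE
  set M : (Fin n → ℝ) →ₗ[ℝ] (Fin dd → ℝ) := Λ.comp gE with hM
  set w : Fin n → (Fin dd → ℝ) := fun i => M (Pi.single i 1) with hw
  have hCcub : C = ⇑gE '' ZP.cub (Fin n) := by
    ext x
    constructor
    · intro hx
      exact ⟨fun i => x i, hx, rfl⟩
    · rintro ⟨cc, hcc, rfl⟩
      exact hcc
  have hCcomp : IsCompact C := by
    rw [hCcub]
    exact (ZP.isCompact_cub (Fin n)).image gE.continuous_of_finiteDimensional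
  have hΛC : ⇑Λ '' C = ZP.zono (Finset.univ : Finset (Fin n)) w := by
    rw [hCcub, ← Set.image_comp, show (⇑Λ ∘ ⇑gE) = ⇑M from rfl, ZP.image_cub_eq_zono]
  have hμC : μH[(dd : ℝ)] (P '' C) = c * volume (ZP.zono (Finset.univ : Finset (Fin n)) w) := by
    rw [HT C hCcomp, hΛC]
  -- faces
  have hface : ∀ (J : Finset (Fin n)) (ε : J → Bool),
      μH[(dd : ℝ)] (P '' cubeFace J ε) = c * volume (ZP.zono Jᶜ w) := by
    intro J ε
    set sgn : Fin n → ℝ := fun j => if h : j ∈ J then (if ε ⟨j, h⟩ then 1 else -1) else 0 with hsgn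
    set tv : EuclideanSpace ℝ (Fin n) := gE sgn with htv
    set SubC : Set (EuclideanSpace ℝ (Fin n)) :=
      ⇑gE '' ZP.zono Jᶜ (fun i => (Pi.single i 1 : Fin n → ℝ)) with hSubC
    have haddcoord : ∀ (z : Fin n → ℝ) (l : Fin n),
        ((fun y => tv + y) (gE z)) l = sgn l + z l := fun z l => rfl
    have hfaceEq : cubeFace J ε = (fun y => tv + y) '' SubC := by
      ext x
      constructor
      · rintro ⟨hIcc, hfix⟩
        set cc : Fin n → ℝ := fun i => if i ∈ J then 0 else x i with hccdef
        have hcc : cc ∈ ZP.cub (Fin n) := by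
          intro i
          by_cases hi : i ∈ J
          · simp only [hccdef, if_pos hi]
            constructor <;> norm_num
          · simp only [hccdef, if_neg hi]
            exact hIcc i
        refine ⟨gE (ZP.comb Jᶜ (fun i => (Pi.single i 1 : Fin n → ℝ)) cc),
          ⟨_, ⟨cc, hcc, rfl⟩, rfl⟩, ?_⟩
        refine PiLp.ext fun l => ?_
        rw [haddcoord, ZP.comb_single_apply]
        by_cases hl : l ∈ J
        · rw [if_neg (by simp [hl]), hsgn]
          simp only [dif_pos hl]
          rw [hfix l hl]
          ring
        · rw [if_pos (Finset.mem_compl.2 hl), hsgn]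
          simp only [dif_neg hl, hccdef, if_neg hl]
          ring
      · rintro ⟨y, ⟨z, ⟨cc, hcc, rfl⟩, rfl⟩, rfl⟩
        constructor
        · intro i
          rw [haddcoord, ZP.comb_single_apply]
          by_cases hi : i ∈ J
          · rw [if_neg (by simp [hi]), hsgn]
            simp only [dif_pos hi]
            split_ifs <;> constructor <;> norm_num
          · rw [if_pos (Finset.mem_compl.2 hi), hsgn]
            simp only [dif_neg hi]
            have hcci := hcc i
            rw [Set.mem_Icc] at hcci ⊢
            constructor <;> [linarith [hcci.1]; linarith [hcci.2]]
        · intro j hj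
          rw [haddcoord, ZP.comb_single_apply,
            if_neg (by simp [hj] : ¬ j ∈ Jᶜ), hsgn]
          simp only [dif_pos hj]
          ring
    have hPface : P '' cubeFace J ε = (fun y => P tv + y) '' (P '' SubC) := by
      have e1 : P '' ((fun y => tv + y) '' SubC) = (fun a => P (tv + a)) '' SubC := by
        rw [← Set.image_comp]; rfl
      have e2 : (fun y => P tv + y) '' (P '' SubC) = (fun a => P tv + P a) '' SubC := by
        rw [← Set.image_comp]; rfl
      rw [hfaceEq, e1, e2]
      apply Set.image_congr
      intro a _
      show P (tv + a) = P tv + P a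
      rw [hP]
      simp
    have hSubCcomp : IsCompact SubC :=
      (ZP.zono_isCompact _ _).image gE.continuous_of_finiteDimensional
    have htrans : μH[(dd : ℝ)] ((fun y => P tv + y) '' (P '' SubC))
        = μH[(dd : ℝ)] (P '' SubC) :=
      (isometry_add_left (P tv)).hausdorffMeasure_image (Or.inl (by positivity)) _
    have hΛSubC : ⇑Λ '' SubC = ZP.zono Jᶜ w := by
      rw [hSubC, ← Set.image_comp, show (⇑Λ ∘ ⇑gE) = ⇑M from rfl, ZP.map_zono]
    rw [hPface, htrans, HT SubC hSubCcomp, hΛSubC]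
  -- final summation
  calc ∑ J ∈ Finset.univ.powersetCard k, ∑ ε : J → Bool, μH[(dd : ℝ)] (P '' cubeFace J ε)
      = ∑ J ∈ Finset.univ.powersetCard k, (2 ^ k : ℝ≥0∞) * (c * volume (ZP.zono Jᶜ w)) := by
        apply Finset.sum_congr rfl
        intro J hJ
        have hJcard : J.card = k := Finset.mem_powersetCard_univ.1 hJ
        calc ∑ ε : J → Bool, μH[(dd : ℝ)] (P '' cubeFace J ε)
            = ∑ _ε : J → Bool, c * volume (ZP.zono Jᶜ w) :=
              Finset.sum_congr rfl fun ε _ => hface J ε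
          _ = (Fintype.card (J → Bool)) • (c * volume (ZP.zono Jᶜ w)) := by
              rw [Finset.sum_const, Finset.card_univ]
          _ = (2 ^ k : ℝ≥0∞) * (c * volume (ZP.zono Jᶜ w)) := by
              rw [Fintype.card_fun, Fintype.card_coe, hJcard, Fintype.card_bool, nsmul_eq_mul]
              push_cast
              ring
    _ = (2 ^ k : ℝ≥0∞) * (c * ∑ J ∈ Finset.univ.powersetCard k, volume (ZP.zono Jᶜ w)) := by
        rw [← Finset.mul_sum, ← Finset.mul_sum]
    _ = (2 ^ k : ℝ≥0∞) * (c * volume (ZP.zono (Finset.univ : Finset (Fin n)) w)) := by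
        congr 2
        rw [ZP.vol_zono_sum (Finset.univ : Finset (Fin n)) dd w]
        apply Finset.sum_nbij' (fun J => Jᶜ) (fun S => Sᶜ)
        · intro a ha
          rw [Finset.mem_powersetCard_univ, Finset.card_compl,
            Finset.mem_powersetCard_univ.1 ha, Fintype.card_fin]
        · intro a ha
          rw [Finset.mem_powersetCard_univ, Finset.card_compl,
            Finset.mem_powersetCard_univ.1 ha, Fintype.card_fin]
          omega
        · intro a _; exact compl_compl a
        · intro a _; exact compl_compl a
        · intro a _; rfl
    _ = 2 ^ k * μH[(dd : ℝ)] (P '' C) := by rw [hμC]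
end
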